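/- The word w = abcbad over the four-letter alphabet {a,b,c,d} is cyclically solvable by a choice-free net but is not cyclically solvable by a weighted marked graph. In particular, the equivalence between cyclic CF-solvability and cyclic WMG-solvability fails for four-letter alphabets. -/

import Mathlib

/-- A labelled transition system with initial state. -/
structure LTS (S L : Type) where
  tr : S → L → S → Prop
  init : S

namespace LTS

/-- Reachability between states of an LTS (directed paths of arcs). -/
def reach {S L : Type} (A : LTS S L) : S → S → Prop :=
  Relation.ReflTransGen (fun s s' => ∃ t, A.tr s t s')

/-- An LTS is reversible if every state is reachable from the initial state
and the initial state is reachable from every state. -/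
def reversible {S L : Type} (A : LTS S L) : Prop :=
  ∀ s : S, A.reach A.init s ∧ A.reach s A.init

end LTS

/-- Isomorphism of labelled transition systems. -/
def ltsIso {S1 S2 L : Type} (A : LTS S1 L) (B : LTS S2 L) : Prop :=
  ∃ ζ : S1 ≃ S2, ζ A.init = B.init ∧ ∀ s t s', A.tr s t s' ↔ B.tr (ζ s) t (ζ s')

/-- A weighted Petri net with places `P` and transitions `T`:
`pre p t` is the weight of the arc from `p` to `t`, `post t p` of the arc from `t` to `p`. -/
structure PetriNet (P T : Type) where
  pre : P → T → ℕ
  post : T → P → ℕ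

namespace PetriNet

variable {P T : Type}

/-- A transition `t` is enabled at marking `M`. -/
def enabled (N : PetriNet P T) (M : P → ℕ) (t : T) : Prop :=
  ∀ p, N.pre p t ≤ M p

/-- A place `p` is enabled by a marking `M`. -/
def placeEnabled (N : PetriNet P T) (M : P → ℕ) (p : P) : Prop :=
  ∀ t, N.pre p t ≤ M p

/-- The marking obtained by firing `t` at `M`. -/
def fire (N : PetriNet P T) (M : P → ℕ) (t : T) : P → ℕ :=
  fun p => M p - N.pre p t + N.post t p

/-- `M [t⟩ M'`. -/
def step (N : PetriNet P T) (M : P → ℕ) (t : T) (M' : P → ℕ) : Prop :=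
  N.enabled M t ∧ M' = N.fire M t

/-- A marking `M'` is reachable from `M` by a finite sequence of firings. -/
def Reach (N : PetriNet P T) (M M' : P → ℕ) : Prop :=
  Relation.ReflTransGen (fun M1 M2 => ∃ t, N.step M1 t M2) M M'

/-- A sequence of transitions is firable from a marking. -/
def firable (N : PetriNet P T) : (P → ℕ) → List T → Prop
  | _, [] => True
  | M, t :: σ => N.enabled M t ∧ N.firable (N.fire M t) σ

/-- The marking reached after firing a sequence of transitions. -/
def fireSeq (N : PetriNet P T) : (P → ℕ) → List T → (P → ℕ)
  | M, [] => M
  | M, t :: σ => N.fireSeq (N.fire M t) σ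

/-- A net is choice-free if every place has at most one output transition. -/
def choiceFree (N : PetriNet P T) : Prop :=
  ∀ p t t', 0 < N.pre p t → 0 < N.pre p t' → t = t'

/-- A weighted marked graph: each place has at most one output and at most one input transition. -/
def wmg (N : PetriNet P T) : Prop :=
  N.choiceFree ∧ ∀ p t t', 0 < N.post t p → 0 < N.post t' p → t = t'

/-- A net is pure if no place is a side condition of some transition. -/
def isPure (N : PetriNet P T) : Prop :=
  ∀ p t, ¬(0 < N.pre p t ∧ 0 < N.post t p)

/-- Liveness: from every reachable marking, every transition can eventually fire again. -/
def live (N : PetriNet P T) (M0 : P → ℕ) : Prop :=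
  ∀ (t : T) (M : P → ℕ), N.Reach M0 M → ∃ M', N.Reach M M' ∧ N.enabled M' t

/-- The reachability graph of a system, as an LTS on the reachable markings. -/
def RG (N : PetriNet P T) (M0 : P → ℕ) : LTS {M : P → ℕ // N.Reach M0 M} T where
  tr := fun M t M' => N.step M.1 t M'.1
  init := ⟨M0, Relation.ReflTransGen.refl⟩

end PetriNet

/-- A system solves an LTS if its reachability graph is isomorphic to it. -/
def Solves {Pl T S : Type} (N : PetriNet Pl T) (M0 : Pl → ℕ) (A : LTS S T) : Prop :=
  ltsIso (N.RG M0) A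

/-- CF-solvability of an LTS. -/
def CFSolvable {S L : Type} (A : LTS S L) : Prop :=
  ∃ (k : ℕ) (N : PetriNet (Fin k) L) (M0 : Fin k → ℕ), N.choiceFree ∧ Solves N M0 A

/-- WMG-solvability of an LTS. -/
def WMGSolvable {S L : Type} (A : LTS S L) : Prop :=
  ∃ (k : ℕ) (N : PetriNet (Fin k) L) (M0 : Fin k → ℕ), N.wmg ∧ Solves N M0 A

/-- Solvability of an LTS by a pure choice-free system. -/
def PureCFSolvable {S L : Type} (A : LTS S L) : Prop :=
  ∃ (k : ℕ) (N : PetriNet (Fin k) L) (M0 : Fin k → ℕ),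
    N.choiceFree ∧ N.isPure ∧ Solves N M0 A

/-- The circular LTS induced by a (nonempty) word `w`. -/
def circLTS {L : Type} (w : List L) (hw : 0 < w.length) : LTS (Fin w.length) L where
  tr := fun s t s' => t = w.get s ∧ s'.val = (s.val + 1) % w.length
  init := ⟨0, hw⟩

/-- The Parikh vector of a word. -/
def parikh {L : Type} [DecidableEq L] (w : List L) (t : L) : ℕ := w.count t

/-- A vector of naturals is prime if the gcd of its components equals 1. -/
def primeVec {L : Type} [Fintype L] (Υ : L → ℕ) : Prop := Finset.univ.gcd Υ = 1

/-- A word is cyclically solvable by a WMG. -/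
def cyclicWMGSolvable {L : Type} (w : List L) : Prop :=
  ∃ (hw : 0 < w.length) (k : ℕ) (N : PetriNet (Fin k) L) (M0 : Fin k → ℕ),
    N.wmg ∧ Solves N M0 (circLTS w hw)

/-- A word is cyclically solvable by a CF net. -/
def cyclicCFSolvable {L : Type} (w : List L) : Prop :=
  ∃ (hw : 0 < w.length) (k : ℕ) (N : PetriNet (Fin k) L) (M0 : Fin k → ℕ),
    N.choiceFree ∧ Solves N M0 (circLTS w hw)

/-- A circuit net: places `p_0 … p_{k-1}` and transitions `τ 0 … τ (k-1)` arranged in a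
single alternating cycle, `τ i` being the unique output of `p_i` and the unique input
of `p_{i+1 mod k}`. -/
def isCircuit {k : ℕ} {L : Type} (hk : 0 < k) (N : PetriNet (Fin k) L) : Prop :=
  ∃ τ : Fin k ≃ L,
    (∀ (i : Fin k) (t : L), 0 < N.pre i t ↔ t = τ i) ∧
    (∀ (i : Fin k) (t : L), 0 < N.post t i ↔ t = τ ⟨(i.val + k - 1) % k, Nat.mod_lt _ hk⟩)

/-- A word is cyclically solvable by a circuit system. -/
def cyclicCircuitSolvable {L : Type} (v : List L) : Prop :=
  ∃ (hv : 0 < v.length) (k : ℕ) (hk : 0 < k) (N : PetriNet (Fin k) L) (M0 : Fin k → ℕ),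
    isCircuit hk N ∧ Solves N M0 (circLTS v hv)

/-- The ordered pair `a b` is circularly adjacent in `w`. -/
def cAdj {L : Type} (w : List L) (a b : L) : Prop :=
  a ≠ b ∧ ((∃ w1 w2, w = w1 ++ a :: b :: w2) ∨ ∃ w3, w = b :: w3 ++ [a])

/-- The projection of a word on a two-element sub-alphabet, as a word over that sub-alphabet. -/
def projPair {L : Type} [DecidableEq L] (w : List L) (a b : L) :
    List {x : L // x = a ∨ x = b} :=
  w.filterMap (fun x => if h : x = a ∨ x = b then some ⟨x, h⟩ else none)

/-- The Parikh vector `P_jq` of the segment of `w` read circularly from state `s_j`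
to state `s_q` (empty when `j = q`). -/
def segParikh {L : Type} [DecidableEq L] (w : List L) (hw : 0 < w.length)
    (j q : Fin w.length) (t : L) : ℕ :=
  ((List.range ((q.val + w.length - j.val) % w.length)).map
    (fun i => w.get ⟨(j.val + i) % w.length, Nat.mod_lt _ hw⟩)).count t

/-- A region of an LTS. -/
def isRegion {S L : Type} (A : LTS S L) (R : S → ℕ) (B F : L → ℕ) : Prop :=
  ∀ s t s', A.tr s t s' → B t ≤ R s ∧ R s' = R s - B t + F t

/-- `gcd_p`: the gcd of all (nonzero) input and output weights of a place. -/
def gcdPlace {Pl T : Type} [Fintype T] (N : PetriNet Pl T) (p : Pl) : ℕ :=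
  Finset.univ.gcd (fun t => Nat.gcd (N.pre p t) (N.post t p))

/-- Conservativeness of a net. -/
def conservative {Pl T : Type} [Fintype Pl] (N : PetriNet Pl T) : Prop :=
  ∃ X : Pl → ℕ, (∀ p, 1 ≤ X p) ∧
    ∀ t, ∑ p, (X p : ℤ) * ((N.post t p : ℤ) - (N.pre p t : ℤ)) = 0

/-- The P-subnet induced by a family of places. -/
def restrictNet {Pl T : Type} {k : ℕ} (N : PetriNet Pl T) (π : Fin k → Pl) :
    PetriNet (Fin k) T where
  pre := fun i t => N.pre (π i) t
  post := fun t i => N.post t (π i)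

section Stmt10Aux

variable {L : Type} [DecidableEq L] {a b c d : L}

/-- The CF net solving abcbad: places 0..3 output a,b,c,d respectively. -/
def s10pre (a b c d : L) : Fin 4 → L → ℕ := fun p t =>
  if t = a then ![2,0,0,0] p else if t = b then ![0,3,0,0] p
  else if t = c then ![0,0,3,0] p else if t = d then ![0,0,0,2] p else 0

def s10post (a b c d : L) : L → Fin 4 → ℕ := fun t p =>
  if t = a then ![0,2,0,1] p else if t = b then ![1,0,1,0] p
  else if t = c then ![0,2,0,0] p else if t = d then ![2,0,1,0] p else 0

def s10net (a b c d : L) : PetriNet (Fin 4) L := ⟨s10pre a b c d, s10post a b c d⟩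

/-- The six reachable markings. -/
def s10mu : Fin 6 → Fin 4 → ℕ :=
  ![![2,2,2,0], ![0,4,2,1], ![1,1,3,1], ![1,3,0,1], ![2,0,1,1], ![0,2,1,2]]

def s10w (a b c d : L) : Fin 6 → L := ![a,b,c,b,a,d]

def s10idx (M : Fin 4 → ℕ) : Fin 6 :=
  if M = s10mu 0 then 0 else if M = s10mu 1 then 1 else if M = s10mu 2 then 2
  else if M = s10mu 3 then 3 else if M = s10mu 4 then 4 else 5

lemma s10mu_inj : Function.Injective s10mu := by decide

lemma s10idx_mu : ∀ i, s10idx (s10mu i) = i := by decide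

lemma s10pre_a (p) : s10pre a b c d p a = ![2,0,0,0] p := if_pos rfl

lemma s10pre_b (h : b ≠ a) (p) : s10pre a b c d p b = ![0,3,0,0] p := by
  simp [s10pre, h]

lemma s10pre_c (h1 : c ≠ a) (h2 : c ≠ b) (p) : s10pre a b c d p c = ![0,0,3,0] p := by
  simp [s10pre, h1, h2]

lemma s10pre_d (h1 : d ≠ a) (h2 : d ≠ b) (h3 : d ≠ c) (p) :
    s10pre a b c d p d = ![0,0,0,2] p := by
  simp [s10pre, h1, h2, h3]

lemma s10post_a (p) : s10post a b c d a p = ![0,2,0,1] p := if_pos rfl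

lemma s10post_b (h : b ≠ a) (p) : s10post a b c d b p = ![1,0,1,0] p := by
  simp [s10post, h]

lemma s10post_c (h1 : c ≠ a) (h2 : c ≠ b) (p) : s10post a b c d c p = ![0,2,0,0] p := by
  simp [s10post, h1, h2]

lemma s10post_d (h1 : d ≠ a) (h2 : d ≠ b) (h3 : d ≠ c) (p) :
    s10post a b c d d p = ![2,0,1,0] p := by
  simp [s10post, h1, h2, h3]

section WithHyps

variable (hba : b ≠ a) (hca : c ≠ a) (hcb : c ≠ b) (hda : d ≠ a) (hdb : d ≠ b) (hdc : d ≠ c)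
variable (hall : ∀ t : L, t = a ∨ t = b ∨ t = c ∨ t = d)

include hba hca hcb hda hdb hdc hall in
lemma s10pre_pos {p : Fin 4} {t : L}
    (h : 0 < s10pre a b c d p t) : t = ![a,b,c,d] p := by
  rcases hall t with rfl | rfl | rfl | rfl
  · rw [s10pre_a] at h
    fin_cases p
    · rfl
    all_goals exact absurd h (by decide)
  · rw [s10pre_b hba] at h
    fin_cases p
    · exact absurd h (by decide)
    · rfl
    all_goals exact absurd h (by decide)
  · rw [s10pre_c hca hcb] at h
    fin_cases p
    · exact absurd h (by decide)
    · exact absurd h (by decide)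
    · rfl
    · exact absurd h (by decide)
  · rw [s10pre_d hda hdb hdc] at h
    fin_cases p
    · exact absurd h (by decide)
    · exact absurd h (by decide)
    · exact absurd h (by decide)
    · rfl

include hba hca hcb hda hdb hdc hall in
lemma s10cf : (s10net a b c d).choiceFree := by
  intro p t t' h h'
  rw [s10pre_pos hba hca hcb hda hdb hdc hall h,
      s10pre_pos hba hca hcb hda hdb hdc hall h']

include hba hca hcb hda hdb hdc hall in
lemma s10enab (i : Fin 6) (t : L) :
    (s10net a b c d).enabled (s10mu i) t ↔ t = s10w a b c d i := by
  constructor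
  · intro h
    rcases hall t with ht | ht | ht | ht
    · have h0 : s10pre a b c d 0 t ≤ s10mu i 0 := h 0
      rw [ht, s10pre_a] at h0
      rw [ht]
      fin_cases i <;> first | rfl | exact absurd h0 (by decide)
    · have h0 : s10pre a b c d 1 t ≤ s10mu i 1 := h 1
      rw [ht, s10pre_b hba] at h0
      rw [ht]
      fin_cases i <;> first | rfl | exact absurd h0 (by decide)
    · have h0 : s10pre a b c d 2 t ≤ s10mu i 2 := h 2
      rw [ht, s10pre_c hca hcb] at h0
      rw [ht]
      fin_cases i <;> first | rfl | exact absurd h0 (by decide)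
    · have h0 : s10pre a b c d 3 t ≤ s10mu i 3 := h 3
      rw [ht, s10pre_d hda hdb hdc] at h0
      rw [ht]
      fin_cases i <;> first | rfl | exact absurd h0 (by decide)
  · rintro rfl
    intro p
    fin_cases i
    · show s10pre a b c d p a ≤ s10mu 0 p
      rw [s10pre_a]; revert p; decide
    · show s10pre a b c d p b ≤ s10mu 1 p
      rw [s10pre_b hba]; revert p; decide
    · show s10pre a b c d p c ≤ s10mu 2 p
      rw [s10pre_c hca hcb]; revert p; decide
    · show s10pre a b c d p b ≤ s10mu 3 p
      rw [s10pre_b hba]; revert p; decide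
    · show s10pre a b c d p a ≤ s10mu 4 p
      rw [s10pre_a]; revert p; decide
    · show s10pre a b c d p d ≤ s10mu 5 p
      rw [s10pre_d hda hdb hdc]; revert p; decide

include hba hca hcb hda hdb hdc in
lemma s10fire (i : Fin 6) :
    (s10net a b c d).fire (s10mu i) (s10w a b c d i) = s10mu (i + 1) := by
  funext p
  fin_cases i
  · show s10mu 0 p - s10pre a b c d p a + s10post a b c d a p = s10mu 1 p
    rw [s10pre_a, s10post_a]; revert p; decide
  · show s10mu 1 p - s10pre a b c d p b + s10post a b c d b p = s10mu 2 p
    rw [s10pre_b hba, s10post_b hba]; revert p; decide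
  · show s10mu 2 p - s10pre a b c d p c + s10post a b c d c p = s10mu 3 p
    rw [s10pre_c hca hcb, s10post_c hca hcb]; revert p; decide
  · show s10mu 3 p - s10pre a b c d p b + s10post a b c d b p = s10mu 4 p
    rw [s10pre_b hba, s10post_b hba]; revert p; decide
  · show s10mu 4 p - s10pre a b c d p a + s10post a b c d a p = s10mu 5 p
    rw [s10pre_a, s10post_a]; revert p; decide
  · show s10mu 5 p - s10pre a b c d p d + s10post a b c d d p = s10mu 0 p
    rw [s10pre_d hda hdb hdc, s10post_d hda hdb hdc]; revert p; decide

include hba hca hcb hda hdb hdc hall in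
lemma s10step (i : Fin 6) :
    (s10net a b c d).step (s10mu i) (s10w a b c d i) (s10mu (i + 1)) :=
  ⟨(s10enab hba hca hcb hda hdb hdc hall i _).mpr rfl,
   (s10fire hba hca hcb hda hdb hdc i).symm⟩

include hba hca hcb hda hdb hdc hall in
lemma s10closed {M : Fin 4 → ℕ} (h : (s10net a b c d).Reach (s10mu 0) M) :
    ∃ i, M = s10mu i := by
  induction h with
  | refl => exact ⟨0, rfl⟩
  | tail _ hstep ih =>
    obtain ⟨i, rfl⟩ := ih
    obtain ⟨t, he, hf⟩ := hstep
    have ht := (s10enab hba hca hcb hda hdb hdc hall i t).mp he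
    subst ht
    exact ⟨i + 1, by rw [hf, s10fire hba hca hcb hda hdb hdc]⟩

include hba hca hcb hda hdb hdc hall in
lemma s10reach (i : Fin 6) : (s10net a b c d).Reach (s10mu 0) (s10mu i) := by
  have st := s10step hba hca hcb hda hdb hdc hall
  have r1 : (s10net a b c d).Reach (s10mu 0) (s10mu 1) :=
    Relation.ReflTransGen.tail Relation.ReflTransGen.refl ⟨_, st 0⟩
  have r2 : (s10net a b c d).Reach (s10mu 0) (s10mu 2) :=
    Relation.ReflTransGen.tail r1 ⟨_, st 1⟩
  have r3 : (s10net a b c d).Reach (s10mu 0) (s10mu 3) :=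
    Relation.ReflTransGen.tail r2 ⟨_, st 2⟩
  have r4 : (s10net a b c d).Reach (s10mu 0) (s10mu 4) :=
    Relation.ReflTransGen.tail r3 ⟨_, st 3⟩
  have r5 : (s10net a b c d).Reach (s10mu 0) (s10mu 5) :=
    Relation.ReflTransGen.tail r4 ⟨_, st 4⟩
  fin_cases i
  exacts [Relation.ReflTransGen.refl, r1, r2, r3, r4, r5]

end WithHyps

end Stmt10Aux

/-- `abcbad` is cyclically CF-solvable but not cyclically WMG-solvable. -/
theorem stmt10 {L : Type} [Fintype L] [DecidableEq L] (a b c d : L)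
    (hdist : [a, b, c, d].Pairwise (· ≠ ·)) (hcard : Fintype.card L = 4) :
    cyclicCFSolvable [a, b, c, b, a, d] ∧ ¬ cyclicWMGSolvable [a, b, c, b, a, d] := by
  have hab : a ≠ b := (List.pairwise_cons.mp hdist).1 b (by simp)
  have hac : a ≠ c := (List.pairwise_cons.mp hdist).1 c (by simp)
  have had : a ≠ d := (List.pairwise_cons.mp hdist).1 d (by simp)
  have hdist2 := (List.pairwise_cons.mp hdist).2
  have hbc : b ≠ c := (List.pairwise_cons.mp hdist2).1 c (by simp)
  have hbd : b ≠ d := (List.pairwise_cons.mp hdist2).1 d (by simp)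
  have hcd : c ≠ d := (List.pairwise_cons.mp (List.pairwise_cons.mp hdist2).2).1 d (by simp)
  have hba := hab.symm
  have hca := hac.symm
  have hcb := hbc.symm
  have hda := had.symm
  have hdb := hbd.symm
  have hdc := hcd.symm
  have hall : ∀ t : L, t = a ∨ t = b ∨ t = c ∨ t = d := by
    have hcard4 : ({a, b, c, d} : Finset L).card = 4 := by
      rw [Finset.card_insert_of_notMem (by simp [hab, hac, had]),
          Finset.card_insert_of_notMem (by simp [hbc, hbd]),
          Finset.card_insert_of_notMem (by simp [hcd]), Finset.card_singleton]
    have huniv : ({a, b, c, d} : Finset L) = Finset.univ :=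
      Finset.eq_univ_of_card _ (hcard4.trans hcard.symm)
    intro t
    have ht : t ∈ ({a, b, c, d} : Finset L) := huniv ▸ Finset.mem_univ t
    simpa using ht
  constructor
  · -- CF solvable
    have hw' : 0 < ([a, b, c, b, a, d] : List L).length := by simp
    refine ⟨hw', 4, s10net a b c d, s10mu 0, s10cf hba hca hcb hda hdb hdc hall, ?_⟩
    have hclosed := fun {M} h => s10closed hba hca hcb hda hdb hdc hall (M := M) h
    have hreach := s10reach hba hca hcb hda hdb hdc hall
    have hw_get : ∀ i : Fin 6, ([a, b, c, b, a, d] : List L).get i = s10w a b c d i := by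
      intro i; fin_cases i <;> rfl
    have hvadd : ∀ i : Fin 6, ((i + 1 : Fin 6)).val = (i.val + 1) % 6 := by decide
    refine ⟨⟨fun M => s10idx M.1, fun i => ⟨s10mu i, hreach i⟩, ?_, ?_⟩, ?_, ?_⟩
    · intro M
      obtain ⟨i, hi⟩ := hclosed M.2
      exact Subtype.ext (by show s10mu (s10idx M.1) = M.1; rw [hi, s10idx_mu])
    · intro i
      exact s10idx_mu i
    · exact s10idx_mu 0
    · intro s t s'
      obtain ⟨i, hi⟩ := hclosed s.2
      obtain ⟨j, hj⟩ := hclosed s'.2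
      show (s10net a b c d).step s.1 t s'.1 ↔
        (t = ([a, b, c, b, a, d] : List L).get (s10idx s.1) ∧
          (s10idx s'.1).val = ((s10idx s.1).val + 1) % ([a, b, c, b, a, d] : List L).length)
      rw [hi, hj, s10idx_mu, s10idx_mu]
      constructor
      · rintro ⟨he, hf⟩
        have ht := (s10enab hba hca hcb hda hdb hdc hall i t).mp he
        subst ht
        refine ⟨(hw_get i).symm, ?_⟩
        have hj' : j = i + 1 :=
          s10mu_inj (hf.trans (s10fire hba hca hcb hda hdb hdc i))
        rw [hj']
        exact hvadd i
      · rintro ⟨rfl, hv⟩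
        have hj' : j = i + 1 := Fin.ext (hv.trans (hvadd i).symm)
        subst hj'
        rw [hw_get]
        exact s10step hba hca hcb hda hdb hdc hall i
  · -- not WMG solvable
    intro hsol
    obtain ⟨hw'', k, N, M0, hwmg, hsolv⟩ := hsol
    obtain ⟨hcf, hpin⟩ := hwmg
    obtain ⟨ζ, hinit, htr⟩ := hsolv
    have l0 : (0:ℕ) < ([a, b, c, b, a, d] : List L).length := by simp
    have l1 : (1:ℕ) < ([a, b, c, b, a, d] : List L).length := by simp
    have l2 : (2:ℕ) < ([a, b, c, b, a, d] : List L).length := by simp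
    have l3 : (3:ℕ) < ([a, b, c, b, a, d] : List L).length := by simp
    have l4 : (4:ℕ) < ([a, b, c, b, a, d] : List L).length := by simp
    have l5 : (5:ℕ) < ([a, b, c, b, a, d] : List L).length := by simp
    let S0 : Fin ([a, b, c, b, a, d] : List L).length := ⟨0, l0⟩
    let S1 : Fin ([a, b, c, b, a, d] : List L).length := ⟨1, l1⟩
    let S2 : Fin ([a, b, c, b, a, d] : List L).length := ⟨2, l2⟩
    let S3 : Fin ([a, b, c, b, a, d] : List L).length := ⟨3, l3⟩
    let S4 : Fin ([a, b, c, b, a, d] : List L).length := ⟨4, l4⟩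
    let S5 : Fin ([a, b, c, b, a, d] : List L).length := ⟨5, l5⟩
    have mkstep : ∀ (u v : Fin ([a, b, c, b, a, d] : List L).length) (t : L),
        (circLTS [a, b, c, b, a, d] hw'').tr u t v → N.step (ζ.symm u).1 t (ζ.symm v).1 := by
      intro u v t harc
      have := (htr (ζ.symm u) t (ζ.symm v)).mpr
        (by rw [Equiv.apply_symm_apply, Equiv.apply_symm_apply]; exact harc)
      exact this
    have st01 : N.step (ζ.symm S0).1 a (ζ.symm S1).1 :=
      mkstep S0 S1 a ⟨rfl, rfl⟩
    have st12 : N.step (ζ.symm S1).1 b (ζ.symm S2).1 :=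
      mkstep S1 S2 b ⟨rfl, rfl⟩
    have st23 : N.step (ζ.symm S2).1 c (ζ.symm S3).1 :=
      mkstep S2 S3 c ⟨rfl, rfl⟩
    have st34 : N.step (ζ.symm S3).1 b (ζ.symm S4).1 :=
      mkstep S3 S4 b ⟨rfl, rfl⟩
    have st45 : N.step (ζ.symm S4).1 a (ζ.symm S5).1 :=
      mkstep S4 S5 a ⟨rfl, rfl⟩
    have st50 : N.step (ζ.symm S5).1 d (ζ.symm S0).1 :=
      mkstep S5 S0 d ⟨rfl, by simp [S0, S5]⟩
    have hM0eq : (ζ.symm S0).1 = M0 := by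
      have h0 : ζ.symm S0 = (N.RG M0).init := (Equiv.symm_apply_eq ζ).mpr hinit.symm
      rw [h0]
      rfl
    rw [hM0eq] at st01 st50
    -- b is not enabled at M0
    have hnb : ¬ N.enabled M0 b := by
      intro he
      have hreach' : N.Reach M0 (N.fire M0 b) :=
        Relation.ReflTransGen.single ⟨b, he, rfl⟩
      have htr' := (htr ⟨M0, Relation.ReflTransGen.refl⟩ b
        ⟨N.fire M0 b, hreach'⟩).mp ⟨he, rfl⟩
      have hinit' : ζ ⟨M0, Relation.ReflTransGen.refl⟩ =
          (⟨0, hw''⟩ : Fin ([a, b, c, b, a, d] : List L).length) := hinit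
      rw [hinit'] at htr'
      exact hab htr'.1.symm
    obtain ⟨p, hp⟩ : ∃ p, M0 p < N.pre p b := by
      by_contra hcon
      push_neg at hcon
      exact hnb hcon
    have hBpos : 0 < N.pre p b := lt_of_le_of_lt (Nat.zero_le _) hp
    have hpre0 : ∀ t, t ≠ b → N.pre p t = 0 := fun t hne => by
      by_contra h
      exact hne (hcf p t b (Nat.pos_of_ne_zero h) hBpos)
    have f1 : (ζ.symm S1).1 p = M0 p - N.pre p a + N.post a p := congrFun st01.2 p
    have hb1 : N.pre p b ≤ (ζ.symm S1).1 p := st12.1 p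
    have f2 : (ζ.symm S2).1 p = (ζ.symm S1).1 p - N.pre p b + N.post b p := congrFun st12.2 p
    have f3 : (ζ.symm S3).1 p = (ζ.symm S2).1 p - N.pre p c + N.post c p := congrFun st23.2 p
    have hb3 : N.pre p b ≤ (ζ.symm S3).1 p := st34.1 p
    have f4 : (ζ.symm S4).1 p = (ζ.symm S3).1 p - N.pre p b + N.post b p := congrFun st34.2 p
    have f5 : (ζ.symm S5).1 p = (ζ.symm S4).1 p - N.pre p a + N.post a p := congrFun st45.2 p
    have f0 : M0 p = (ζ.symm S5).1 p - N.pre p d + N.post d p := congrFun st50.2 p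
    rw [hpre0 a hab] at f1 f5
    rw [hpre0 c hcb] at f3
    rw [hpre0 d hdb] at f0
    have hapos : 0 < N.post a p := by omega
    have hpostb : N.post b p = 0 := by
      by_contra h
      exact hab (hpin p a b hapos (Nat.pos_of_ne_zero h))
    have hpostc : N.post c p = 0 := by
      by_contra h
      exact hac (hpin p a c hapos (Nat.pos_of_ne_zero h))
    have hpostd : N.post d p = 0 := by
      by_contra h
      exact had (hpin p a d hapos (Nat.pos_of_ne_zero h))
    rw [hpostb] at f2 f4
    rw [hpostc] at f3
    rw [hpostd] at f0
    omega
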